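/- Let $H \in \mathrm{SO}(3)$. Then $\frac{1}{2\pi}\int_0^{2\pi} \log\left(6 - 2\,\mathrm{trace}(H R(\phi))\right) d\phi = 2\log\left(\sqrt{2} + \sqrt{1 - e_3^T H e_3}\right)$. -/

import Mathlib

open Real Matrix intervalIntegral
open MeasureTheory Set Filter Topology

lemma cauchy_avg (p : ℝ) (w : ℂ) (hw : ‖w‖ < p) :
    ∫ θ in (0:ℝ)..(2*π), Real.log ‖(p:ℂ) - w * Complex.exp (θ * Complex.I)‖
      = 2 * π * Real.log p := by
  have hp : 0 < p := lt_of_le_of_lt (norm_nonneg w) hw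
  set f : ℂ → ℂ := fun z => Complex.log ((p:ℂ) - w * z) with hf
  have hre : ∀ z : ℂ, ‖z‖ ≤ 1 → 0 < ((p:ℂ) - w * z).re := by
    intro z hz
    have h1 : (w * z).re ≤ ‖w * z‖ := Complex.re_le_norm _
    have h2 : ‖w * z‖ ≤ ‖w‖ := by
      rw [norm_mul]
      nlinarith [norm_nonneg w, norm_nonneg z]
    simp only [Complex.sub_re, Complex.ofReal_re, Complex.mul_re]
    have := Complex.mul_re w z
    nlinarith [Complex.re_le_norm (w*z)]
  have hdiff : ∀ z : ℂ, ‖z‖ ≤ 1 → DifferentiableAt ℂ f z := by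
    intro z hz
    apply DifferentiableAt.clog
    · fun_prop
    · exact Or.inl (hre z hz)
  have hcl : DiffContOnCl ℂ f (Metric.ball (0:ℂ) 1) := by
    apply DifferentiableOn.diffContOnCl
    rw [closure_ball (0:ℂ) one_ne_zero]
    intro z hz
    exact (hdiff z (by simpa [Complex.dist_eq] using hz)).differentiableWithinAt
  have hint := hcl.circleIntegral_sub_inv_smul (Metric.mem_ball_self one_pos)
  -- unfold circle integral
  rw [circleIntegral] at hint
  simp only [deriv_circleMap, smul_eq_mul, sub_zero] at hint
  have hne : ∀ θ : ℝ, circleMap 0 1 θ ≠ 0 := fun θ => circleMap_ne_center one_ne_zero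
  have hint2 : ∫ θ in (0:ℝ)..(2*π), Complex.I * f (circleMap 0 1 θ)
      = 2 * π * Complex.I * f 0 := by
    rw [← hint]
    congr 1
    funext θ
    field_simp
  rw [intervalIntegral.integral_const_mul] at hint2
  have hI : (Complex.I : ℂ) ≠ 0 := Complex.I_ne_zero
  have hint3 : ∫ θ in (0:ℝ)..(2*π), f (circleMap 0 1 θ) = 2 * π * f 0 := by
    apply mul_left_cancel₀ hI
    rw [hint2]; ring
  -- continuity
  have hcont : Continuous fun θ : ℝ => f (circleMap 0 1 θ) := by
    rw [continuous_iff_continuousAt]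
    intro θ
    exact (hdiff _ (by simp)).continuousAt.comp (continuous_circleMap 0 1).continuousAt
  have h0le : (0:ℝ) ≤ 2*π := by positivity
  have hre_int : ∫ θ in (0:ℝ)..(2*π), Real.log ‖(p:ℂ) - w * Complex.exp (θ * Complex.I)‖
      = (∫ θ in (0:ℝ)..(2*π), f (circleMap 0 1 θ)).re := by
    rw [intervalIntegral.integral_of_le h0le, intervalIntegral.integral_of_le h0le]
    have h := integral_re (μ := volume.restrict (Ioc (0:ℝ) (2*π)))
      (f := fun θ:ℝ => f (circleMap 0 1 θ)) hcont.integrableOn_Ioc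
    rw [← RCLike.re_to_complex, ← h]
    apply MeasureTheory.integral_congr_ae
    filter_upwards with θ
    rw [RCLike.re_to_complex, hf]
    simp only [Complex.log_re, circleMap, Complex.ofReal_one, one_mul]
    norm_num
  rw [hre_int, hint3]
  rw [hf]
  simp only [mul_zero, sub_zero]
  rw [← Complex.ofReal_log hp.le]
  simp [Complex.ofReal_mul]

lemma cauchy_real (p q δ : ℝ) (hq : 0 ≤ q) (hpq : q < p) :
    ∫ θ in (0:ℝ)..(2*π), Real.log (p^2 + q^2 - 2*p*q*Real.cos (θ + δ))
      = 2 * π * Real.log (p^2) := by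
  have hp : 0 < p := lt_of_le_of_lt hq hpq
  set w : ℂ := (q:ℂ) * Complex.exp (δ * Complex.I) with hwdef
  have hw : ‖w‖ = q := by
    rw [hwdef, norm_mul, Complex.norm_exp_ofReal_mul_I, mul_one, Complex.norm_real, Real.norm_eq_abs, abs_of_nonneg hq]
  have key : ∀ θ : ℝ, p^2 + q^2 - 2*p*q*Real.cos (θ + δ)
      = (‖(p:ℂ) - w * Complex.exp (θ * Complex.I)‖)^2 := by
    intro θ
    have : (p:ℂ) - w * Complex.exp (θ * Complex.I)
        = (p:ℂ) - (q:ℂ) * Complex.exp ((θ + δ) * Complex.I) := by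
      rw [hwdef, show ((θ:ℂ)+(δ:ℂ))*Complex.I = δ*Complex.I + θ*Complex.I by ring,
        Complex.exp_add]
      ring
    rw [this, show ((θ:ℝ)+δ : ℂ) = ((θ+δ : ℝ) : ℂ) by push_cast; ring,
      Complex.sq_norm, Complex.normSq_apply]
    simp only [Complex.sub_re, Complex.sub_im, Complex.ofReal_re, Complex.ofReal_im,
      Complex.mul_re, Complex.mul_im, Complex.exp_ofReal_mul_I_re, Complex.exp_ofReal_mul_I_im]
    nlinarith [Real.sin_sq_add_cos_sq (θ + δ)]
  have h1 : ∫ θ in (0:ℝ)..(2*π), Real.log (p^2 + q^2 - 2*p*q*Real.cos (θ + δ))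
      = ∫ θ in (0:ℝ)..(2*π), 2 * Real.log ‖(p:ℂ) - w * Complex.exp (θ * Complex.I)‖ := by
    apply intervalIntegral.integral_congr
    intro θ _
    simp only
    rw [key θ, Real.log_pow]
    norm_num
  rw [h1, intervalIntegral.integral_const_mul, cauchy_avg p w (by rw [hw]; exact hpq),
    Real.log_pow]
  push_cast
  ring

lemma log_two_sub_bounds {θ : ℝ} (h1 : 0 < θ) (h2 : θ ≤ π) :
    4*θ^2/π^2 ≤ 2 - 2*Real.cos θ ∧ 2 - 2*Real.cos θ ≤ θ^2 := by
  constructor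
  · have hs : θ/π ≤ Real.sin (θ/2) := by
      have := Real.mul_le_sin (x := θ/2) (by linarith) (by linarith)
      calc θ/π = 2/π * (θ/2) := by field_simp
        _ ≤ Real.sin (θ/2) := this
    have hc : Real.cos θ = 1 - 2 * Real.sin (θ/2)^2 := by
      have hcc := Real.cos_two_mul (θ/2)
      rw [show 2*(θ/2) = θ by ring] at hcc
      nlinarith [Real.sin_sq_add_cos_sq (θ/2)]
    have hθπ : 0 < θ/π := by positivity
    rw [hc]
    have : (θ/π)^2 ≤ Real.sin (θ/2)^2 := by nlinarith
    have hπ : (0:ℝ) < π := Real.pi_pos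
    rw [div_le_iff₀ (by positivity)] at *
    nlinarith
  · nlinarith [Real.one_sub_sq_div_two_le_cos (x := θ)]

lemma abs_log_two_sub_cos_le {θ : ℝ} (h1 : 0 < θ) (h2 : θ ≤ π) :
    |Real.log (2 - 2*Real.cos θ)| ≤ 8 * θ^(-(1/2) : ℝ) + 18 := by
  obtain ⟨hlo, hhi⟩ := log_two_sub_bounds h1 h2
  have hπ : (0:ℝ) < π := Real.pi_pos
  have hpos : (0:ℝ) < 4*θ^2/π^2 := by positivity
  have hup : Real.log (2 - 2*Real.cos θ) ≤ 2 * Real.log θ :=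
    (Real.log_le_log_iff (by linarith) (by positivity)).mpr hhi
      |>.trans_eq (by rw [show (θ:ℝ)^2 = θ*θ by ring,
        Real.log_mul (ne_of_gt h1) (ne_of_gt h1)]; ring)
  have hdn : 2 * Real.log θ + Real.log (4/π^2) ≤ Real.log (2 - 2*Real.cos θ) := by
    have := Real.log_le_log (by positivity : (0:ℝ) < 4*θ^2/π^2) hlo
    calc 2 * Real.log θ + Real.log (4/π^2)
        = Real.log (4*θ^2/π^2) := by
          rw [show 4*θ^2/π^2 = θ*θ * (4/π^2) by ring,
            Real.log_mul (by positivity) (by positivity),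
            Real.log_mul (ne_of_gt h1) (ne_of_gt h1)]
          ring
      _ ≤ _ := this
  -- |log θ| ≤ 2 θ^(-1/2) + 4
  have hlogθ : |Real.log θ| ≤ 2 * θ^(-(1/2) : ℝ) + 4 := by
    have hrp : (0:ℝ) < θ^(-(1/2) : ℝ) := Real.rpow_pos_of_pos h1 _
    rcases le_or_gt θ 1 with hle | hgt
    · have : Real.log (θ^(-(1/2) : ℝ)) = -(1/2) * Real.log θ := Real.log_rpow h1 _
      have h4 : Real.log (θ^(-(1/2) : ℝ)) ≤ θ^(-(1/2) : ℝ) - 1 := Real.log_le_sub_one_of_pos hrp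
      have h5 : Real.log θ ≤ 0 := Real.log_nonpos (le_of_lt h1) hle
      rw [abs_of_nonpos h5]
      nlinarith
    · have h5 : 0 ≤ Real.log θ := Real.log_nonneg (le_of_lt hgt)
      rw [abs_of_nonneg h5]
      have : Real.log θ ≤ θ - 1 := Real.log_le_sub_one_of_pos h1
      have : θ ≤ π := h2
      nlinarith [Real.pi_lt_d2]
  -- |log (4/π²)| ≤ 2
  have hlc : |Real.log (4/π^2)| ≤ 2 := by
    rw [abs_le]
    constructor
    · have : Real.log (π^2/4) ≤ π^2/4 - 1 := Real.log_le_sub_one_of_pos (by positivity)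
      have hinv : Real.log (4/π^2) = - Real.log (π^2/4) := by
        rw [← Real.log_inv]; congr 1; field_simp
      nlinarith [Real.pi_lt_d2]
    · have : Real.log (4/π^2) ≤ 4/π^2 - 1 := Real.log_le_sub_one_of_pos (by positivity)
      nlinarith [Real.pi_gt_three]
  rw [abs_le] at *
  constructor <;> nlinarith [Real.rpow_pos_of_pos h1 (-(1/2):ℝ)]

lemma integrable_log_two_sub_cos_pos : IntervalIntegrable
    (fun θ => Real.log (2 - 2*Real.cos θ)) volume 0 π := by
  have hπ : (0:ℝ) < π := Real.pi_pos
  rw [intervalIntegrable_iff_integrableOn_Ioc_of_le (le_of_lt hπ)]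
  have hg : IntegrableOn (fun θ : ℝ => 8 * θ^(-(1/2) : ℝ) + 18) (Ioc 0 π) volume := by
    apply MeasureTheory.Integrable.add
    · exact ((intervalIntegral.intervalIntegrable_rpow' (by norm_num : (-1:ℝ) < -(1/2))
        (a := 0) (b := π)).const_mul 8).1
    · exact integrableOn_const (by simp [Real.pi_pos])
  apply MeasureTheory.Integrable.mono' hg
  · apply Measurable.aestronglyMeasurable
    exact Real.measurable_log.comp (by measurability)
  · filter_upwards [ae_restrict_mem measurableSet_Ioc] with θ hθ
    rw [Real.norm_eq_abs]
    exact abs_log_two_sub_cos_le hθ.1 hθ.2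

lemma periodic_ltc : Function.Periodic (fun θ => Real.log (2 - 2*Real.cos θ)) (2*π) := by
  intro x; simp [Real.cos_add_two_pi]

lemma integrable_log_two_sub_cos_symm : IntervalIntegrable
    (fun θ => Real.log (2 - 2*Real.cos θ)) volume (-π) π := by
  have hA := integrable_log_two_sub_cos_pos
  have hB : IntervalIntegrable (fun θ => Real.log (2 - 2*Real.cos θ)) volume (-π) 0 := by
    have := (IntervalIntegrable.iff_comp_neg (by simp)).mp hA
    simp only [Real.cos_neg, neg_zero] at this
    exact this.symm
  exact hB.trans hA

lemma integrable_log_two_sub_cos (c : ℝ) : IntervalIntegrable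
    (fun θ => Real.log (2 - 2*Real.cos θ)) volume c (c + 2*π) := by
  have hπ : (0:ℝ) < π := Real.pi_pos
  -- integrable on any [-π + 2πk, π + 2πk]
  have hk : ∀ k : ℤ, IntervalIntegrable (fun θ => Real.log (2 - 2*Real.cos θ)) volume
      (-π + 2*π*k) (π + 2*π*k) := by
    intro k
    have h1 := integrable_log_two_sub_cos_symm.comp_sub_right (2*π*k)
    have h2 : (fun θ => Real.log (2 - 2*Real.cos (θ - 2*π*k))) =
        (fun θ => Real.log (2 - 2*Real.cos θ)) := by
      funext θ
      rw [show θ - 2*π*k = θ + ((-k : ℤ) : ℝ) * (2*π) by push_cast; ring,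
        Real.cos_add_int_mul_two_pi]
    rw [h2] at h1
    convert h1 using 2 <;> ring
  set k : ℤ := ⌊(c + π)/(2*π)⌋ with hkdef
  have h1 : (k : ℝ) ≤ (c + π)/(2*π) := Int.floor_le _
  have h2 : (c + π)/(2*π) < k + 1 := Int.lt_floor_add_one _
  have hB := hk (k+1)
  push_cast at hB
  rw [show -π + 2*π*((k:ℝ)+1) = π + 2*π*k by ring] at hB
  have hco : IntervalIntegrable (fun θ => Real.log (2 - 2*Real.cos θ)) volume
      (-π + 2*π*k) (π + 2*π*((k:ℝ)+1)) := (hk k).trans hB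
  apply hco.mono_set
  rw [uIcc_of_le, uIcc_of_le]
  · apply Icc_subset_Icc
    · rw [le_div_iff₀ (by positivity)] at h1; linarith
    · rw [div_lt_iff₀ (by positivity)] at h2; push_cast; linarith
  · rw [le_div_iff₀ (by positivity)] at h1
    rw [div_lt_iff₀ (by positivity)] at h2
    push_cast; linarith
  · linarith

lemma log_two_sub_cos_integral_zero :
    ∫ θ in (0:ℝ)..(2*π), Real.log (2 - 2*Real.cos θ) = 0 := by
  have hπ : (0:ℝ) < π := Real.pi_pos
  have hshift : ∫ θ in (0:ℝ)..(2*π), Real.log (2 - 2*Real.cos θ)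
      = ∫ θ in (-π)..π, Real.log (2 - 2*Real.cos θ) := by
    have := periodic_ltc.intervalIntegral_add_eq 0 (-π)
    rw [zero_add, show -π + 2*π = π by ring] at this
    exact this
  rw [hshift, intervalIntegral.integral_of_le (by linarith)]
  set μ := volume.restrict (Ioc (-π) π) with hμ
  set r : ℕ → ℝ := fun n => 1 + 1/(n+1) with hr
  have hr1 : ∀ n, 1 < r n := by
    intro n; rw [hr]; simp only []
    have : (0:ℝ) < 1/((n:ℝ)+1) := by positivity
    linarith
  have hr2 : ∀ n, r n ≤ 2 := by
    intro n; rw [hr]; simp only []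
    have h1 : (1:ℝ) ≤ (n:ℝ)+1 := by exact_mod_cast Nat.le_add_left 1 n
    have : 1/((n:ℝ)+1) ≤ 1 := by
      rw [div_le_one (by positivity)]; exact h1
    linarith
  set F : ℕ → ℝ → ℝ := fun n θ => Real.log ((r n)^2 + 1 - 2*(r n)*Real.cos θ) with hF
  have hFval : ∀ n, ∫ θ, F n θ ∂μ = 2*π*Real.log ((r n)^2) := by
    intro n
    have h1 := cauchy_real (r n) 1 0 zero_le_one (hr1 n)
    have h2 : ∫ θ in (0:ℝ)..(2*π), F n θ = 2*π*Real.log ((r n)^2) := by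
      rw [← h1]
      apply intervalIntegral.integral_congr
      intro θ _
      simp only [hF]
      norm_num
    have hper : Function.Periodic (F n) (2*π) := by
      intro x; simp [hF, Real.cos_add_two_pi]
    have h3 := hper.intervalIntegral_add_eq 0 (-π)
    rw [zero_add, show -π + 2*π = π by ring] at h3
    rw [hμ, ← intervalIntegral.integral_of_le (by linarith : -π ≤ π), ← h3, h2]
  have h0 : ∀ᵐ θ : ℝ ∂μ, θ ≠ 0 := by
    apply ae_restrict_of_ae
    rw [ae_iff]
    simp only [not_not, Set.setOf_eq_eq_singleton]
    exact measure_singleton 0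
  have hmem : ∀ᵐ θ : ℝ ∂μ, θ ∈ Ioc (-π) π := ae_restrict_mem measurableSet_Ioc
  have hcos : ∀ θ : ℝ, θ ∈ Ioc (-π) π → θ ≠ 0 → Real.cos θ < 1 := by
    intro θ hθ hne
    rcases lt_or_eq_of_le (Real.cos_le_one θ) with h | h
    · exact h
    · exfalso
      have := (Real.cos_eq_one_iff_of_lt_of_lt (by linarith [hθ.1] : -(2*π) < θ)
        (by linarith [hθ.2] : θ < 2*π)).mp h
      exact hne this
  have hbound_int : Integrable (fun θ => |Real.log (2 - 2*Real.cos θ)| + Real.log 9) μ :=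
    (integrable_log_two_sub_cos_symm.1.abs).add (integrable_const _)
  have hdct := MeasureTheory.tendsto_integral_of_dominated_convergence
    (F := F) (f := fun θ => Real.log (2 - 2*Real.cos θ))
    (bound := fun θ => |Real.log (2 - 2*Real.cos θ)| + Real.log 9)
    (fun n => (Real.measurable_log.comp (by measurability)).aestronglyMeasurable)
    hbound_int
    (by
      intro n
      filter_upwards [hmem, h0] with θ hθ hne
      have hc := hcos θ hθ hne
      have hx1 : 2 - 2*Real.cos θ ≤ (r n)^2 + 1 - 2*(r n)*Real.cos θ := by
        nlinarith [hr1 n, Real.cos_le_one θ]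
      have hx2 : (r n)^2 + 1 - 2*(r n)*Real.cos θ ≤ 9 := by
        nlinarith [hr2 n, hr1 n, Real.neg_one_le_cos θ]
      have hpos : (0:ℝ) < 2 - 2*Real.cos θ := by linarith
      have hup : Real.log ((r n)^2 + 1 - 2*(r n)*Real.cos θ) ≤ Real.log 9 :=
        (Real.log_le_log_iff (by linarith) (by norm_num)).mpr hx2
      have hdn : Real.log (2 - 2*Real.cos θ) ≤ Real.log ((r n)^2 + 1 - 2*(r n)*Real.cos θ) :=
        (Real.log_le_log_iff hpos (by linarith)).mpr hx1
      rw [Real.norm_eq_abs, abs_le]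
      have h9 : (0:ℝ) ≤ Real.log 9 := Real.log_nonneg (by norm_num)
      constructor
      · have := neg_abs_le (Real.log (2 - 2*Real.cos θ))
        simp only [hF]
        linarith
      · have h2 := abs_nonneg (Real.log (2 - 2*Real.cos θ))
        simp only [hF]
        linarith)
    (by
      filter_upwards [hmem, h0] with θ hθ hne
      have hc := hcos θ hθ hne
      have hpos : (0:ℝ) < 2 - 2*Real.cos θ := by linarith
      have hrt : Tendsto r atTop (𝓝 1) := by
        rw [hr]
        have := tendsto_one_div_add_atTop_nhds_zero_nat (𝕜 := ℝ)
        have h2 := this.const_add (1:ℝ)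
        simpa using h2
      have hcont : ContinuousAt (fun x : ℝ => Real.log (x^2 + 1 - 2*x*Real.cos θ)) 1 := by
        apply ContinuousAt.comp (g := Real.log)
        · rw [show (1:ℝ)^2 + 1 - 2*1*Real.cos θ = 2 - 2*Real.cos θ by ring]
          exact Real.continuousAt_log (by linarith)
        · fun_prop
      have := hcont.tendsto.comp hrt
      simp only [Function.comp_def] at this
      rw [show (1:ℝ)^2 + 1 - 2*1*Real.cos θ = 2 - 2*Real.cos θ by ring] at this
      exact this)
  have hlim2 : Tendsto (fun n => ∫ θ, F n θ ∂μ) atTop (𝓝 0) := by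
    rw [show (fun n => ∫ θ, F n θ ∂μ) = fun n => 2*π*Real.log ((r n)^2) by
      funext n; exact hFval n]
    have hrt : Tendsto r atTop (𝓝 1) := by
      rw [hr]
      have := tendsto_one_div_add_atTop_nhds_zero_nat (𝕜 := ℝ)
      have h2 := this.const_add (1:ℝ)
      simpa using h2
    have h1 : Tendsto (fun n => Real.log (r n)) atTop (𝓝 0) := by
      have := (Real.continuousAt_log one_ne_zero).tendsto.comp hrt
      simpa [Function.comp_def, Real.log_one] using this
    have h2 : Tendsto (fun n => (4*π) * Real.log (r n)) atTop (𝓝 0) := by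
      simpa using h1.const_mul (4*π)
    convert h2 using 2 with n
    rw [Real.log_pow]
    push_cast; ring
  exact tendsto_nhds_unique hdct hlim2

lemma log_two_sub_cos_shift (δ : ℝ) :
    ∫ θ in (0:ℝ)..(2*π), Real.log (2 - 2*Real.cos (θ - δ)) = 0 := by
  have h1 : ∫ θ in (0:ℝ)..(2*π), Real.log (2 - 2*Real.cos (θ - δ))
      = ∫ θ in (0-δ:ℝ)..(2*π-δ), Real.log (2 - 2*Real.cos θ) :=
    intervalIntegral.integral_comp_sub_right (fun θ => Real.log (2 - 2*Real.cos θ)) δ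
  have h2 := periodic_ltc.intervalIntegral_add_eq (-δ) 0
  rw [zero_add] at h2
  rw [h1, show (0:ℝ)-δ = -δ by ring, show 2*π-δ = -δ+2*π by ring, h2,
    log_two_sub_cos_integral_zero]

lemma integrable_log_two_sub_cos_shift (δ : ℝ) :
    IntervalIntegrable (fun θ => Real.log (2 - 2*Real.cos (θ - δ))) volume 0 (2*π) := by
  have h1 := (integrable_log_two_sub_cos (-δ)).comp_sub_right δ
  rw [show -δ+δ = (0:ℝ) by ring] at h1
  convert h1 using 1
  ring

lemma key3 (a b c : ℝ) (ha : 0 < a) (h : b^2 + c^2 ≤ a^2) :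
    ∫ θ in (0:ℝ)..(2*π), Real.log (a - b*Real.cos θ - c*Real.sin θ)
      = 2*π * Real.log ((a + Real.sqrt (a^2 - b^2 - c^2))/2) := by
  set r : ℝ := Real.sqrt (b^2 + c^2) with hrdef
  have hr0 : 0 ≤ r := Real.sqrt_nonneg _
  have hr2 : r^2 = b^2 + c^2 := Real.sq_sqrt (by positivity)
  have hra : r ≤ a := by
    rw [hrdef]
    calc Real.sqrt (b^2+c^2) ≤ Real.sqrt (a^2) := Real.sqrt_le_sqrt h
      _ = a := Real.sqrt_sq ha.le
  -- polar decomposition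
  obtain ⟨δ, hb, hc⟩ : ∃ δ, b = r * Real.cos δ ∧ c = r * Real.sin δ := by
    set z : ℂ := ⟨b, c⟩ with hz
    have habs : ‖z‖ = r := by
      rw [Complex.norm_def, Complex.normSq_apply, hrdef]
      norm_num [hz]
      ring_nf
    have h1 := Complex.norm_mul_cos_add_sin_mul_I z
    refine ⟨z.arg, ?_, ?_⟩
    · have := congrArg Complex.re h1
      simp only [Complex.mul_re, Complex.add_re, Complex.add_im, Complex.mul_im,
        Complex.cos_ofReal_re, Complex.cos_ofReal_im, Complex.sin_ofReal_re,
        Complex.sin_ofReal_im, Complex.I_re, Complex.I_im, Complex.ofReal_re,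
        Complex.ofReal_im] at this
      rw [habs] at this
      simp only [hz] at this
      linarith [this]
    · have := congrArg Complex.im h1
      simp only [Complex.mul_re, Complex.add_re, Complex.add_im, Complex.mul_im,
        Complex.cos_ofReal_re, Complex.cos_ofReal_im, Complex.sin_ofReal_re,
        Complex.sin_ofReal_im, Complex.I_re, Complex.I_im, Complex.ofReal_re,
        Complex.ofReal_im] at this
      rw [habs] at this
      simp only [hz] at this
      linarith [this]
  have hint : ∀ θ : ℝ, a - b*Real.cos θ - c*Real.sin θ = a - r * Real.cos (θ - δ) := by
    intro θ
    rw [hb, hc, Real.cos_sub]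
    ring
  set s : ℝ := Real.sqrt (a^2 - b^2 - c^2) with hsdef
  have hs0 : 0 ≤ s := Real.sqrt_nonneg _
  have hs2 : s^2 = a^2 - r^2 := by
    rw [hsdef, Real.sq_sqrt (by nlinarith)]
    rw [hr2]; ring
  have hsa : s ≤ a := by
    nlinarith
  rcases lt_or_eq_of_le hra with hlt | heq
  · -- nondegenerate case
    set p : ℝ := Real.sqrt ((a+s)/2) with hpdef
    set q : ℝ := Real.sqrt ((a-s)/2) with hqdef
    have hp2 : p^2 = (a+s)/2 := Real.sq_sqrt (by positivity)
    have hq2 : q^2 = (a-s)/2 := Real.sq_sqrt (by linarith)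
    have hq0 : 0 ≤ q := Real.sqrt_nonneg _
    have hspos : 0 < s := by
      rcases lt_or_eq_of_le hs0 with h' | h'
      · exact h'
      · exfalso; nlinarith
    have hqp : q < p := by
      have : q^2 < p^2 := by rw [hp2, hq2]; linarith
      nlinarith [Real.sqrt_nonneg ((a+s)/2)]
    have hpq : p * q = r / 2 := by
      rw [hpdef, hqdef, ← Real.sqrt_mul (by positivity)]
      rw [show (a+s)/2 * ((a-s)/2) = (a^2-s^2)/4 by ring, hs2,
        show a^2 - (a^2 - r^2) = r^2 by ring]
      rw [show r^2/4 = (r/2)^2 by ring, Real.sqrt_sq (by positivity)]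
    have hsum : p^2 + q^2 = a := by rw [hp2, hq2]; ring
    have h2pq : 2*(p*q) = r := by rw [hpq]; ring
    have hform : ∀ θ : ℝ, a - r * Real.cos (θ - δ) = p^2 + q^2 - 2*p*q*Real.cos (θ + (-δ)) := by
      intro θ
      rw [show θ + (-δ) = θ - δ by ring]
      linear_combination (-1 : ℝ) * hsum + Real.cos (θ - δ) * h2pq
    rw [show (∫ θ in (0:ℝ)..(2*π), Real.log (a - b*Real.cos θ - c*Real.sin θ))
        = ∫ θ in (0:ℝ)..(2*π), Real.log (p^2 + q^2 - 2*p*q*Real.cos (θ + (-δ))) from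
      intervalIntegral.integral_congr (fun θ _ => by rw [hint θ, hform θ])]
    rw [cauchy_real p q (-δ) hq0 hqp, hp2]
  · -- boundary case r = a
    have hs' : s = 0 := by
      have : s^2 = 0 := by rw [hs2, ← heq]; ring
      nlinarith
    have hhalf : ∀ θ : ℝ, a - r * Real.cos (θ - δ) = (a/2) * (2 - 2*Real.cos (θ - δ)) := by
      intro θ; rw [← heq]; ring
    have hae : ∀ᵐ θ : ℝ ∂(volume : Measure ℝ), Real.cos (θ - δ) ≠ 1 := by
      rw [ae_iff]
      refine measure_mono_null (fun θ hθ => ?_)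
        ((Set.countable_range (fun n : ℤ => δ + n * (2*π))).measure_zero _)
      simp only [not_not, Set.mem_setOf_eq] at hθ
      obtain ⟨n, hn⟩ := (Real.cos_eq_one_iff _).mp hθ
      exact ⟨n, by show δ + (n:ℝ)*(2*π) = θ; linarith⟩
    have hcongr : ∫ θ in (0:ℝ)..(2*π), Real.log (a - b*Real.cos θ - c*Real.sin θ)
        = ∫ θ in (0:ℝ)..(2*π), (Real.log (a/2) + Real.log (2 - 2*Real.cos (θ - δ))) := by
      apply intervalIntegral.integral_congr_ae
      filter_upwards [hae] with θ hθ _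
      have h1 : Real.cos (θ - δ) < 1 := lt_of_le_of_ne (Real.cos_le_one _) hθ
      rw [hint θ, hhalf θ, Real.log_mul (by positivity) (ne_of_gt (by nlinarith))]
    rw [hcongr, intervalIntegral.integral_add (intervalIntegrable_const)
      (integrable_log_two_sub_cos_shift δ), log_two_sub_cos_shift δ,
      intervalIntegral.integral_const, hsdef]
    rw [show a^2 - b^2 - c^2 = a^2 - r^2 by rw [hr2]; ring, ← heq]
    simp [Real.pi_pos.le]


/-- The rotation by angle `ψ` about the `z`-axis. -/
noncomputable def rotZ (ψ : ℝ) : Matrix (Fin 3) (Fin 3) ℝ :=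
  !![Real.cos ψ, -Real.sin ψ, 0; Real.sin ψ, Real.cos ψ, 0; 0, 0, 1]

/-- For `H ∈ SO(3)`,
`(1/2π) ∫₀^{2π} log(6 - 2 trace(H R(φ))) dφ = 2 log(√2 + √(1 - h₃₃))`. -/
theorem integral_log_six_sub_trace (H : Matrix (Fin 3) (Fin 3) ℝ)
    (hH : H * Hᵀ = 1) (hdet : H.det = 1) :
    (1 / (2 * π)) * ∫ φ in (0:ℝ)..(2 * π),
        Real.log (6 - 2 * Matrix.trace (H * rotZ φ))
      = 2 * Real.log (Real.sqrt 2 + Real.sqrt (1 - H 2 2)) := by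
  have hH' : Hᵀ * H = 1 := mul_eq_one_comm.mp hH
  have e00 : H 0 0^2 + H 0 1^2 + H 0 2^2 = 1 := by
    have := congrFun (congrFun hH 0) 0
    simp [Matrix.mul_apply, Fin.sum_univ_three, Matrix.one_apply] at this
    nlinarith [this]
  have e11 : H 1 0^2 + H 1 1^2 + H 1 2^2 = 1 := by
    have := congrFun (congrFun hH 1) 1
    simp [Matrix.mul_apply, Fin.sum_univ_three, Matrix.one_apply] at this
    nlinarith [this]
  have c22 : H 0 2^2 + H 1 2^2 + H 2 2^2 = 1 := by
    have := congrFun (congrFun hH' 2) 2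
    simp [Matrix.mul_apply, Fin.sum_univ_three, Matrix.one_apply] at this
    nlinarith [this]
  have hadj : H.adjugate = Hᵀ := by
    have hl : H * H.adjugate = 1 := by rw [Matrix.mul_adjugate, hdet, one_smul]
    calc H.adjugate = 1 * H.adjugate := (one_mul _).symm
      _ = (Hᵀ * H) * H.adjugate := by rw [hH']
      _ = Hᵀ * (H * H.adjugate) := by rw [Matrix.mul_assoc]
      _ = Hᵀ := by rw [hl, Matrix.mul_one]
  have h22 : H 0 0 * H 1 1 - H 0 1 * H 1 0 = H 2 2 := by
    have := congrFun (congrFun hadj 2) 2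
    rw [Matrix.adjugate_fin_three] at this
    simp [Matrix.transpose_apply] at this
    linarith [this]
  have hident : (H 0 0 + H 1 1)^2 + (H 0 1 - H 1 0)^2 = (1 + H 2 2)^2 := by
    linear_combination e00 + e11 - c22 + 2*h22
  have hb1 : H 2 2 ≤ 1 := by nlinarith [c22, sq_nonneg (H 0 2), sq_nonneg (H 1 2)]
  have hbm : -1 ≤ H 2 2 := by nlinarith [c22, sq_nonneg (H 0 2), sq_nonneg (H 1 2)]
  set t : ℝ := H 2 2 with ht
  have htr : ∀ φ : ℝ, Matrix.trace (H * rotZ φ)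
      = (H 0 0 + H 1 1)*Real.cos φ + (H 0 1 - H 1 0)*Real.sin φ + t := by
    intro φ
    rw [Matrix.trace_fin_three]
    simp [Matrix.mul_apply, Fin.sum_univ_three, rotZ]
    ring
  have ha : (0:ℝ) < 6 - 2*t := by linarith
  have hbc : (2*(H 0 0 + H 1 1))^2 + (2*(H 0 1 - H 1 0))^2 ≤ (6 - 2*t)^2 := by
    nlinarith [hident]
  have hmain := key3 (6 - 2*t) (2*(H 0 0 + H 1 1)) (2*(H 0 1 - H 1 0)) ha hbc
  have hcongr : ∫ φ in (0:ℝ)..(2*π), Real.log (6 - 2 * Matrix.trace (H * rotZ φ))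
      = ∫ φ in (0:ℝ)..(2*π), Real.log ((6 - 2*t) - (2*(H 0 0 + H 1 1))*Real.cos φ
          - (2*(H 0 1 - H 1 0))*Real.sin φ) := by
    apply intervalIntegral.integral_congr
    intro φ _
    simp only
    rw [htr φ]
    congr 1
    ring
  have h32 : (6-2*t)^2 - (2*(H 0 0 + H 1 1))^2 - (2*(H 0 1 - H 1 0))^2 = 32*(1-t) := by
    linear_combination (-4 : ℝ) * hident
  have hs32 : (4*Real.sqrt 2)^2 = 32 := by
    rw [mul_pow, Real.sq_sqrt (by norm_num : (0:ℝ) ≤ 2)]; norm_num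
  have hsqrt : Real.sqrt (32*(1-t)) = 4*Real.sqrt 2 * Real.sqrt (1-t) := by
    rw [← hs32, Real.sqrt_mul (by positivity), Real.sqrt_sq (by positivity)]
  have e1 : Real.sqrt 2^2 = 2 := Real.sq_sqrt (by norm_num)
  have e2 : Real.sqrt (1-t)^2 = 1-t := Real.sq_sqrt (by linarith)
  have hfin : (6 - 2*t + Real.sqrt ((6-2*t)^2 - (2*(H 0 0 + H 1 1))^2
      - (2*(H 0 1 - H 1 0))^2))/2 = (Real.sqrt 2 + Real.sqrt (1-t))^2 := by
    rw [h32, hsqrt]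
    linear_combination -e1 - e2
  rw [hcongr, hmain, hfin, Real.log_pow]
  have hπ : π ≠ 0 := Real.pi_ne_zero
  push_cast
  field_simp
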